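/- For every n ≥ 2 and every party k, the n-qubit cat state tensor a (defined by a i = 1/√2 if i is the constant-0 or constant-1 tuple and a i = 0 otherwise) satisfies det(M_k * M_kᴴ − 1) = 1/4, where M_k is the k-th flattening of a, M_kᴴ its conjugate transpose, and 1 the identity matrix of the same size as M_k * M_kᴴ. -/
import Mathlib

open Matrix

noncomputable section

/-- Insert `j` at position `k` into the partial index tuple `I`, producing a full tuple. -/
def insertAt {n : ℕ} (k : Fin n) (I : {s : Fin n // s ≠ k} → Fin 2) (j : Fin 2) :
    Fin n → Fin 2 :=
  fun t => if h : t = k then j else I ⟨t, h⟩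

/-- The `k`-th flattening of an `n`-qubit amplitude tensor `a`. -/
def flatten {n : ℕ} (a : (Fin n → Fin 2) → ℂ) (k : Fin n) :
    Matrix ({s : Fin n // s ≠ k} → Fin 2) (Fin 2) ℂ :=
  fun I j => a (insertAt k I j)

lemma insertAt_eq_const {n : ℕ} (k : Fin n) (I : {s : Fin n // s ≠ k} → Fin 2)
    (j v : Fin 2) : insertAt k I j = (fun _ => v) ↔ j = v ∧ I = fun _ => v := by
  constructor
  · intro h
    refine ⟨?_, ?_⟩
    · have := congrFun h k; simpa [insertAt] using this
    · funext s; have := congrFun h s.1; simpa [insertAt, s.2] using this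
  · rintro ⟨rfl, rfl⟩; funext t; simp [insertAt]

/-- For the `n`-qubit cat state, `det (M_k M_kᴴ - 1) = 1/4` for every party `k`. -/
theorem catState_det_eq_quarter {n : ℕ} (hn : 2 ≤ n) (k : Fin n) :
    Matrix.det
      (flatten (fun i : Fin n → Fin 2 =>
          if (i = fun _ => 0) ∨ (i = fun _ => 1) then (1 / Real.sqrt 2 : ℂ) else 0) k *
        (flatten (fun i : Fin n → Fin 2 =>
          if (i = fun _ => 0) ∨ (i = fun _ => 1) then (1 / Real.sqrt 2 : ℂ) else 0) k)ᴴ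
        - 1) = 1 / 4 := by
  set c : ℂ := (1 / Real.sqrt 2 : ℂ) with hc
  set a : (Fin n → Fin 2) → ℂ :=
    fun i => if (i = fun _ => 0) ∨ (i = fun _ => 1) then c else 0 with ha
  set c0 : {s : Fin n // s ≠ k} → Fin 2 := fun _ => 0 with hc0
  set c1 : {s : Fin n // s ≠ k} → Fin 2 := fun _ => 1 with hc1
  have hnt : Nontrivial (Fin n) :=
    ⟨⟨⟨0, by omega⟩, ⟨1, by omega⟩, by simp [Fin.ext_iff]⟩⟩
  obtain ⟨s, hs⟩ := exists_ne k
  have hne : c0 ≠ c1 := by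
    intro h
    have := congrFun h ⟨s, hs⟩
    simp [hc0, hc1] at this
  have hM : ∀ I j, flatten a k I j =
      if (j = 0 ∧ I = c0) ∨ (j = 1 ∧ I = c1) then c else 0 := by
    intro I j
    simp only [flatten, ha, insertAt_eq_const, hc0, hc1]
  have hcc : c * (starRingEnd ℂ) c = 1 / 2 := by
    have h2 : ((Real.sqrt 2 : ℝ) : ℂ) * ((Real.sqrt 2 : ℝ) : ℂ) = 2 := by
      norm_cast
      rw [Real.mul_self_sqrt] <;> norm_num
    rw [hc, map_div₀, Complex.conj_ofReal, _root_.map_one, div_mul_div_comm, one_mul, h2]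
  have key : flatten a k * (flatten a k)ᴴ - 1 =
      Matrix.diagonal (fun I => if I = c0 ∨ I = c1 then (-(1/2) : ℂ) else -1) := by
    ext I I'
    simp only [Matrix.sub_apply, Matrix.mul_apply, Matrix.conjTranspose_apply,
      Fin.sum_univ_two, hM, Matrix.diagonal_apply, Matrix.one_apply]
    by_cases h0 : I = c0 <;> by_cases h1 : I = c1 <;>
      by_cases h0' : I' = c0 <;> by_cases h1' : I' = c1 <;>
      simp_all [hcc]
    all_goals try ring
    all_goals split_ifs with h
    all_goals try simp
    all_goals exact absurd h.symm (by assumption)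
  rw [key, Matrix.det_diagonal]
  have hsplit : ∀ I : {s : Fin n // s ≠ k} → Fin 2,
      (if I = c0 ∨ I = c1 then (-(1/2) : ℂ) else -1) =
        (-1) * (if I = c0 ∨ I = c1 then (1/2 : ℂ) else 1) := by
    intro I; split_ifs <;> ring
  simp only [hsplit]
  rw [Finset.prod_mul_distrib, Finset.prod_const]
  have hcard : Fintype.card ({s : Fin n // s ≠ k} → Fin 2) = 2 ^ (n - 1) := by
    rw [Fintype.card_fun, Fintype.card_fin]
    congr 1
    rw [Fintype.card_subtype_compl]
    simp
  have h1 : ((-1 : ℂ)) ^ ((Finset.univ : Finset ({s : Fin n // s ≠ k} → Fin 2)).card) = 1 := by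
    rw [Finset.card_univ, hcard]
    refine Even.neg_one_pow ?_
    exact (Nat.even_pow' (by omega)).mpr even_two
  have h2 : (∏ I : {s : Fin n // s ≠ k} → Fin 2,
      (if I = c0 ∨ I = c1 then (1/2 : ℂ) else 1)) = 1 / 4 := by
    rw [← Finset.prod_subset (Finset.subset_univ ({c0, c1} : Finset _))
      (by intro x _ hx; simp at hx; simp [hx.1, hx.2])]
    rw [Finset.prod_pair hne]
    norm_num
  rw [h1, h2, one_mul]
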